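/- With the entropy-maximizing weights $p_k(x)$ on the interior of a polytope with vertices $a_1,\dots,a_n$, for every $x \in P^o$ and every $k$ one has $1/p_k(x) = n - (x - a_k, \nabla U(x))$, where $U$ is the entropy function. -/

import Mathlib

open Finset

/-- The entropy function of a polytope with vertices `a 1, …, a n`:
`U(x) = sup { ∑ᵢ ln pᵢ : pᵢ > 0, ∑ pᵢ = 1, ∑ pᵢ aᵢ = x }`. -/
noncomputable def entropyU {d n : ℕ} (a : Fin n → EuclideanSpace ℝ (Fin d))
    (x : EuclideanSpace ℝ (Fin d)) : ℝ :=
  sSup {s | ∃ p : Fin n → ℝ, (∀ i, 0 < p i) ∧ ∑ i, p i = 1 ∧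
    ∑ i, p i • a i = x ∧ s = ∑ i, Real.log (p i)}

lemma log_lb {c u : ℝ} (hc : 0 < c) (hu : -(c/2) ≤ u) :
    u/c - 2*(u/c)^2 ≤ Real.log (c + u) - Real.log c := by
  set t := u/c with ht
  have h1 : (1:ℝ)/2 ≤ 1 + t := by
    have : -(1/2 : ℝ) ≤ t := by
      rw [ht, le_div_iff₀ hc]; nlinarith
    linarith
  have h1' : (0:ℝ) < 1 + t := by linarith
  have hcu : c + u = c * (1 + t) := by rw [ht]; field_simp
  have hlog : Real.log (c + u) - Real.log c = Real.log (1 + t) := by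
    rw [hcu, Real.log_mul (ne_of_gt hc) (ne_of_gt h1')]; ring
  rw [hlog]
  have key : 1 - 1/(1+t) ≤ Real.log (1 + t) := by
    have := Real.log_le_sub_one_of_pos (x := 1/(1+t)) (by positivity)
    rw [Real.log_div one_ne_zero (ne_of_gt h1'), Real.log_one] at this
    linarith
  have h3 : t - 2*t^2 ≤ 1 - 1/(1+t) := by
    have he : 1 - 1/(1+t) = t/(1+t) := by field_simp; ring
    rw [he, le_div_iff₀ h1']
    nlinarith
  linarith

lemma log_mid {c b : ℝ} (hc : 0 < c) (hb : 0 < b) :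
    Real.log c + Real.log b ≤ 2 * Real.log ((c+b)/2) := by
  have h2 : (0:ℝ) < (c+b)/2 := by positivity
  have h : c * b ≤ ((c+b)/2)^2 := by nlinarith [sq_nonneg (c - b)]
  calc Real.log c + Real.log b = Real.log (c*b) := (Real.log_mul hc.ne' hb.ne').symm
    _ ≤ Real.log (((c+b)/2)^2) := Real.log_le_log (by positivity) h
    _ = 2 * Real.log ((c+b)/2) := by rw [Real.log_pow]; push_cast; ring

lemma exists_q {d n : ℕ} (hn : 0 < n) (a : Fin n → EuclideanSpace ℝ (Fin d))
    (hspan : affineSpan ℝ (Set.range a) = ⊤) :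
    ∃ q : EuclideanSpace ℝ (Fin d) →ₗ[ℝ] (Fin n → ℝ),
      ∀ v, (∑ i, q v i = 0) ∧ ∑ i, q v i • a i = v := by
  haveI : NeZero n := ⟨hn.ne'⟩
  let T : (Fin n → ℝ) →ₗ[ℝ] ℝ × EuclideanSpace ℝ (Fin d) :=
    { toFun := fun c => (∑ i, c i, ∑ i, c i • a i)
      map_add' := by
        intro c c'
        simp [Prod.ext_iff, Finset.sum_add_distrib, add_smul]
      map_smul' := by
        intro r c
        simp [Prod.ext_iff, Finset.mul_sum, mul_smul, smul_sum] }
  have hsurj : Function.Surjective T := by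
    rintro ⟨s, v⟩
    have hvs : vectorSpan ℝ (Set.range a) = ⊤ := by
      rw [← direction_affineSpan, hspan, AffineSubspace.direction_top]
    have hmem : v - s • a 0 ∈ Submodule.span ℝ (Set.range fun i => a i - a 0) := by
      have : v - s • a 0 ∈ vectorSpan ℝ (Set.range a) := by rw [hvs]; trivial
      rwa [vectorSpan_range_eq_span_range_vsub_right ℝ a 0] at this
    rw [Submodule.mem_span_range_iff_exists_fun] at hmem
    obtain ⟨c, hc⟩ := hmem
    refine ⟨fun i => c i + (if i = 0 then (s - ∑ j, c j) else 0), ?_⟩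
    have h1 : ∑ i, (c i + if i = 0 then (s - ∑ j, c j) else 0) = s := by
      rw [Finset.sum_add_distrib, Finset.sum_ite_eq' univ (0 : Fin n)]
      simp
    have h2 : ∑ i, (c i + if i = 0 then (s - ∑ j, c j) else 0) • a i = v := by
      have expand : ∀ i : Fin n, (c i + if i = 0 then (s - ∑ j, c j) else 0) • a i
          = c i • (a i - a 0) + c i • a 0 + (if i = 0 then (s - ∑ j, c j) else 0) • a i := by
        intro i
        rw [add_smul, smul_sub]
        abel
      rw [Finset.sum_congr rfl (fun i _ => expand i)]
      rw [Finset.sum_add_distrib, Finset.sum_add_distrib, hc]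
      simp only [ite_smul, zero_smul]
      rw [Finset.sum_ite_eq' univ (0 : Fin n) (fun i => (s - ∑ j, c j) • a i)]
      simp only [mem_univ, if_true, ← Finset.sum_smul]
      rw [sub_smul]
      abel
    exact Prod.ext h1 h2
  obtain ⟨S, hS⟩ := T.exists_rightInverse_of_surjective (LinearMap.range_eq_top.2 hsurj)
  refine ⟨S ∘ₗ LinearMap.inr ℝ ℝ (EuclideanSpace ℝ (Fin d)), fun v => ?_⟩
  have key : T (S (LinearMap.inr ℝ ℝ (EuclideanSpace ℝ (Fin d)) v)) = (0, v) := by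
    have := LinearMap.congr_fun hS (LinearMap.inr ℝ ℝ (EuclideanSpace ℝ (Fin d)) v)
    simpa using this
  exact ⟨congrArg Prod.fst key, congrArg Prod.snd key⟩

lemma entU_eq {d n : ℕ} (a : Fin n → EuclideanSpace ℝ (Fin d)) (y : EuclideanSpace ℝ (Fin d)) :
    entropyU a y = sSup {s | ∃ p : Fin n → ℝ, (∀ i, 0 < p i) ∧ ∑ i, p i = 1 ∧
      ∑ i, p i • a i = y ∧ s = ∑ i, Real.log (p i)} := rfl

lemma entU_bdd {d n : ℕ} (a : Fin n → EuclideanSpace ℝ (Fin d)) (y : EuclideanSpace ℝ (Fin d)) :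
    BddAbove {s | ∃ p : Fin n → ℝ, (∀ i, 0 < p i) ∧ ∑ i, p i = 1 ∧
      ∑ i, p i • a i = y ∧ s = ∑ i, Real.log (p i)} := by
  refine ⟨0, ?_⟩
  rintro s ⟨r, h1, h2, h3, rfl⟩
  apply Finset.sum_nonpos
  intro i _
  apply Real.log_nonpos (h1 i).le
  calc r i ≤ ∑ j, r j := Finset.single_le_sum (fun j _ => (h1 j).le) (mem_univ i)
    _ = 1 := h2

lemma entU_le {d n : ℕ} (a : Fin n → EuclideanSpace ℝ (Fin d)) (y : EuclideanSpace ℝ (Fin d))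
    (r : Fin n → ℝ) (h1 : ∀ i, 0 < r i) (h2 : ∑ i, r i = 1) (h3 : ∑ i, r i • a i = y) :
    ∑ i, Real.log (r i) ≤ entropyU a y := by
  rw [entU_eq]
  exact le_csSup (entU_bdd a y) ⟨r, h1, h2, h3, rfl⟩

lemma entU_mid {d n : ℕ} (a : Fin n → EuclideanSpace ℝ (Fin d)) (y v : EuclideanSpace ℝ (Fin d))
    (h1 : {s | ∃ p : Fin n → ℝ, (∀ i, 0 < p i) ∧ ∑ i, p i = 1 ∧
      ∑ i, p i • a i = y + v ∧ s = ∑ i, Real.log (p i)}.Nonempty)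
    (h2 : {s | ∃ p : Fin n → ℝ, (∀ i, 0 < p i) ∧ ∑ i, p i = 1 ∧
      ∑ i, p i • a i = y - v ∧ s = ∑ i, Real.log (p i)}.Nonempty) :
    entropyU a (y + v) + entropyU a (y - v) ≤ 2 * entropyU a y := by
  have main : entropyU a (y + v) ≤ 2 * entropyU a y - entropyU a (y - v) := by
    rw [entU_eq a (y+v)]
    apply csSup_le h1
    rintro s ⟨p', hp1, hp2, hp3, rfl⟩
    have : entropyU a (y - v) ≤ 2 * entropyU a y - ∑ i, Real.log (p' i) := by
      rw [entU_eq a (y-v)]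
      apply csSup_le h2
      rintro t ⟨p'', hq1, hq2, hq3, rfl⟩
      set m : Fin n → ℝ := fun i => (p' i + p'' i)/2 with hm
      have hm1 : ∀ i, 0 < m i := fun i => by
        have := hp1 i; have := hq1 i; simp only [hm]; positivity
      have hm2 : ∑ i, m i = 1 := by
        simp only [hm, ← Finset.sum_div, Finset.sum_add_distrib, hp2, hq2]
        norm_num
      have hm3 : ∑ i, m i • a i = y := by
        have key : ∀ i ∈ univ, m i • a i
            = (2⁻¹:ℝ) • (p' i • a i) + (2⁻¹:ℝ) • (p'' i • a i) := by
          intro i _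
          rw [smul_smul, smul_smul, ← add_smul]
          congr 1
          simp only [hm]; ring
        rw [Finset.sum_congr rfl key, Finset.sum_add_distrib, ← Finset.smul_sum,
          ← Finset.smul_sum, hp3, hq3]
        module
      have hsum : ∑ i, Real.log (p' i) + ∑ i, Real.log (p'' i)
          ≤ 2 * ∑ i, Real.log (m i) := by
        rw [← Finset.sum_add_distrib, Finset.mul_sum]
        exact Finset.sum_le_sum fun i _ => log_mid (hp1 i) (hq1 i)
      have := entU_le a y m hm1 hm2 hm3
      linarith
    linarith
  linarith

set_option maxHeartbeats 1600000 in
/-- For every interior point `x` and every `k`,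
`1/pₖ(x) = n - U_{(x - aₖ)}(x)`. -/
theorem stmt_9 {d n : ℕ} (hn : 2 ≤ n) (a : Fin n → EuclideanSpace ℝ (Fin d))
    (ha : Function.Injective a)
    (P : Set (EuclideanSpace ℝ (Fin d)))
    (hP : P = convexHull ℝ (Set.range a))
    (hvert : ∀ i, a i ∈ Set.extremePoints ℝ P)
    (hint : (interior P).Nonempty)
    (p : EuclideanSpace ℝ (Fin d) → Fin n → ℝ)
    (hp : ∀ x ∈ interior P, (∀ i, 0 < p x i) ∧ ∑ i, p x i = 1 ∧
      ∑ i, p x i • a i = x ∧ ∑ i, Real.log (p x i) = entropyU a x) :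
    ∀ x ∈ interior P, ∀ k,
      1 / p x k = (n : ℝ) - fderiv ℝ (entropyU a) x (x - a k) := by
  intro x hx k
  haveI : NeZero n := ⟨by omega⟩
  obtain ⟨hpos, hsum, hrep, hlog⟩ := hp x hx
  clear hp
  have hspan : affineSpan ℝ (Set.range a) = ⊤ := by
    rw [hP] at hint
    have := (convex_convexHull ℝ (Set.range a)).interior_nonempty_iff_affineSpan_eq_top.mp hint
    rwa [affineSpan_convexHull] at this
  obtain ⟨q, hq⟩ := exists_q (by omega) a hspan
  -- an operator bound for q
  set M : ℝ := ‖LinearMap.toContinuousLinearMap q‖ + 1 with hM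
  have hM0 : 0 < M := by positivity
  have hMb : ∀ (v : EuclideanSpace ℝ (Fin d)) i, |q v i| ≤ M * ‖v‖ := by
    intro v i
    have h1 : ‖q v i‖ ≤ ‖q v‖ := norm_le_pi_norm (q v) i
    have h2 : ‖(LinearMap.toContinuousLinearMap q) v‖
        ≤ ‖LinearMap.toContinuousLinearMap q‖ * ‖v‖ :=
      (LinearMap.toContinuousLinearMap q).le_opNorm v
    have h3 : (LinearMap.toContinuousLinearMap q) v = q v := congrFun (LinearMap.coe_toContinuousLinearMap' q) v
    rw [h3] at h2
    calc |q v i| = ‖q v i‖ := rfl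
      _ ≤ ‖q v‖ := h1
      _ ≤ ‖LinearMap.toContinuousLinearMap q‖ * ‖v‖ := h2
      _ ≤ M * ‖v‖ := by
          apply mul_le_mul_of_nonneg_right _ (norm_nonneg v)
          rw [hM]; linarith
  -- the minimum of the weights
  obtain ⟨j0, -, hj0⟩ := Finset.exists_min_image univ (p x) ⟨0, mem_univ 0⟩
  set pm := p x j0 with hpm
  have hpm0 : 0 < pm := hpos j0
  have hpmle : ∀ i, pm ≤ p x i := fun i => hj0 i (mem_univ i)
  set δ : ℝ := pm / (2 * M) with hδ
  have hδ0 : 0 < δ := div_pos hpm0 (by positivity)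
  have hqsmall : ∀ v : EuclideanSpace ℝ (Fin d), ‖v‖ ≤ δ → ∀ i, |q v i| ≤ p x i / 2 := by
    intro v hv i
    calc |q v i| ≤ M * ‖v‖ := hMb v i
      _ ≤ M * δ := by nlinarith
      _ = pm / 2 := by rw [hδ]; field_simp
      _ ≤ p x i / 2 := by linarith [hpmle i]
  set C : ℝ := ∑ i, 2 * M^2 / (p x i)^2 with hC
  have hC0 : 0 ≤ C := Finset.sum_nonneg fun i _ => by positivity
  set ℓ : EuclideanSpace ℝ (Fin d) →ₗ[ℝ] ℝ :=
    { toFun := fun v => ∑ i, q v i / p x i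
      map_add' := by intro u w; simp [add_div, Finset.sum_add_distrib]
      map_smul' := by intro r u; simp [Finset.mul_sum, mul_div_assoc] } with hℓ
  have hℓapp : ∀ v, ℓ v = ∑ i, q v i / p x i := fun v => rfl
  -- feasibility of the perturbed weights
  have hfeas : ∀ v : EuclideanSpace ℝ (Fin d), ‖v‖ ≤ δ →
      (∀ i, 0 < p x i + q v i) ∧ (∑ i, (p x i + q v i) = 1) ∧
      (∑ i, (p x i + q v i) • a i = x + v) := by
    intro v hv
    refine ⟨fun i => ?_, ?_, ?_⟩
    · have h1 := (abs_le.1 (hqsmall v hv i)).1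
      have h2 := hpos i
      linarith
    · rw [Finset.sum_add_distrib, hsum, (hq v).1]; ring
    · simp only [add_smul]
      rw [Finset.sum_add_distrib, hrep, (hq v).2]
  -- quadratic lower bound
  have hlow : ∀ v : EuclideanSpace ℝ (Fin d), ‖v‖ ≤ δ →
      entropyU a x + ℓ v - C * ‖v‖^2 ≤ entropyU a (x + v) := by
    intro v hv
    obtain ⟨hr1, hr2, hr3⟩ := hfeas v hv
    have hle := entU_le a (x+v) (fun i => p x i + q v i) hr1 hr2 hr3
    have hsum2 : ∑ i, (Real.log (p x i) + (q v i / p x i - 2 * (q v i / p x i)^2))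
        ≤ ∑ i, Real.log (p x i + q v i) := by
      apply Finset.sum_le_sum
      intro i _
      have := log_lb (hpos i) (u := q v i) (by linarith [(abs_le.1 (hqsmall v hv i)).1])
      linarith
    have e1 : ∑ i, (Real.log (p x i) + (q v i / p x i - 2 * (q v i / p x i)^2))
        = entropyU a x + ℓ v - ∑ i, 2 * (q v i / p x i)^2 := by
      rw [Finset.sum_add_distrib, Finset.sum_sub_distrib, hlog, hℓapp]
      ring
    have e4 : ∑ i, 2 * (q v i / p x i)^2 ≤ C * ‖v‖^2 := by
      rw [hC, Finset.sum_mul]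
      apply Finset.sum_le_sum
      intro i _
      have h2 : (q v i)^2 ≤ (M * ‖v‖)^2 := by
        rw [← sq_abs]
        exact pow_le_pow_left₀ (abs_nonneg _) (hMb v i) 2
      have h3 : (0:ℝ) < (p x i)^2 := pow_pos (hpos i) 2
      calc 2 * (q v i / p x i)^2 = 2 * (q v i)^2 / (p x i)^2 := by
            rw [div_pow]; ring
        _ ≤ 2 * (M * ‖v‖)^2 / (p x i)^2 := by gcongr
        _ = 2 * M^2 / (p x i)^2 * ‖v‖^2 := by ring
    linarith
  -- quadratic upper bound via midpoint concavity
  have hup : ∀ v : EuclideanSpace ℝ (Fin d), ‖v‖ ≤ δ →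
      entropyU a (x + v) ≤ entropyU a x + ℓ v + C * ‖v‖^2 := by
    intro v hv
    have hvneg : ‖-v‖ ≤ δ := by rwa [norm_neg]
    obtain ⟨hr1, hr2, hr3⟩ := hfeas v hv
    obtain ⟨hs1, hs2, hs3⟩ := hfeas (-v) hvneg
    have hxv : x + -v = x - v := (sub_eq_add_neg x v).symm
    have hmid := entU_mid a x v
      ⟨∑ i, Real.log (p x i + q v i), fun i => p x i + q v i, hr1, hr2, hr3, rfl⟩
      ⟨∑ i, Real.log (p x i + q (-v) i), fun i => p x i + q (-v) i, hs1, hs2,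
        by rw [hs3, hxv], rfl⟩
    have hlow2 := hlow (-v) hvneg
    rw [hxv] at hlow2
    have hnegℓ : ℓ (-v) = - ℓ v := map_neg ℓ v
    rw [hnegℓ, norm_neg] at hlow2
    linarith
  -- differentiability
  have hFD : HasFDerivAt (entropyU a) (LinearMap.toContinuousLinearMap ℓ) x := by
    rw [hasFDerivAt_iff_isLittleO_nhds_zero, Asymptotics.isLittleO_iff]
    intro ε hε
    rw [Metric.eventually_nhds_iff]
    refine ⟨min δ (ε/(C+1)), lt_min hδ0 (div_pos hε (by linarith)), ?_⟩
    intro v hv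
    rw [dist_zero_right] at hv
    have hv1 : ‖v‖ ≤ δ := le_of_lt (lt_of_lt_of_le hv (min_le_left _ _))
    have hv2 : ‖v‖ ≤ ε/(C+1) := le_of_lt (lt_of_lt_of_le hv (min_le_right _ _))
    have h1 := hlow v hv1
    have h2 := hup v hv1
    have happ : (LinearMap.toContinuousLinearMap ℓ) v = ℓ v := congrFun (LinearMap.coe_toContinuousLinearMap' ℓ) v
    rw [happ]
    have habs : |entropyU a (x+v) - entropyU a x - ℓ v| ≤ C * ‖v‖^2 :=
      abs_le.2 ⟨by linarith, by linarith⟩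
    have hCv : C * ‖v‖ ≤ ε := by
      have h5 : C * ‖v‖ ≤ C * (ε/(C+1)) := by
        apply mul_le_mul_of_nonneg_left hv2 hC0
      have h6 : C * (ε/(C+1)) ≤ ε := by
        rw [div_eq_inv_mul, ← mul_assoc]
        have : C * (C+1)⁻¹ ≤ 1 := by
          rw [mul_inv_le_iff₀ (by linarith)]; linarith
        nlinarith
      linarith
    show |entropyU a (x+v) - entropyU a x - ℓ v| ≤ ε * ‖v‖
    calc |entropyU a (x+v) - entropyU a x - ℓ v| ≤ C * ‖v‖^2 := habs
      _ = C * ‖v‖ * ‖v‖ := by ring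
      _ ≤ ε * ‖v‖ := by
          apply mul_le_mul_of_nonneg_right hCv (norm_nonneg v)
  have hfder : fderiv ℝ (entropyU a) x = LinearMap.toContinuousLinearMap ℓ := hFD.fderiv
  -- the key inequality 1/pⱼ - n ≤ ℓ (aⱼ - x)
  have hkey : ∀ j : Fin n, 1 / p x j - (n:ℝ) ≤ ℓ (a j - x) := by
    intro j
    set w := a j - x with hw
    clear_value w
    set D : Fin n → ℝ := fun i => (if i = j then 1 else 0) - p x i with hD
    clear_value D
    have hDlb : ∀ i, -p x i ≤ D i := by
      intro i
      simp only [hD]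
      split <;> [linarith; linarith]
    have hDsum : ∑ i, D i = 0 := by
      simp only [hD]
      rw [Finset.sum_sub_distrib, Finset.sum_ite_eq' univ j (fun _ => (1:ℝ)), hsum]
      simp
    have hDrep : ∑ i, D i • a i = w := by
      simp only [hD, sub_smul, ite_smul, one_smul, zero_smul]
      rw [Finset.sum_sub_distrib, Finset.sum_ite_eq' univ j a, hrep]
      simp [hw]
    have hDdiv : ∑ i, D i / p x i = 1 / p x j - n := by
      simp only [hD, sub_div]
      rw [Finset.sum_sub_distrib]
      have h1 : ∑ i, (if i = j then (1:ℝ) else 0) / p x i = 1 / p x j := by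
        have : ∀ i ∈ univ, (if i = j then (1:ℝ) else 0) / p x i
            = (if i = j then 1 / p x i else 0) := by
          intro i _
          split <;> simp
        rw [Finset.sum_congr rfl this, Finset.sum_ite_eq' univ j (fun i => 1 / p x i)]
        simp
      have h2 : ∑ i, p x i / p x i = (n:ℝ) := by
        have : ∀ i ∈ univ, p x i / p x i = (1:ℝ) := fun i _ => div_self (hpos i).ne'
        rw [Finset.sum_congr rfl this]
        simp [Finset.card_univ]
      rw [h1, h2]
    set C₂ : ℝ := ∑ i, 2 * (D i / p x i)^2 with hC₂
    have hC₂0 : 0 ≤ C₂ := Finset.sum_nonneg fun i _ => by positivity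
    clear_value C₂
    set K : ℝ := C₂ + C * ‖w‖^2 with hK
    have hK0 : 0 ≤ K := by positivity
    clear_value K
    set t₀ : ℝ := min (1/2 : ℝ) (δ / (‖w‖ + 1)) with ht₀
    have ht₀a : t₀ ≤ 1/2 := min_le_left _ _
    have ht₀b : t₀ ≤ δ / (‖w‖ + 1) := min_le_right _ _
    have ht₀0 : 0 < t₀ := lt_min (by norm_num) (div_pos hδ0 (by positivity))
    clear_value t₀
    have hstep : ∀ t : ℝ, 0 < t → t ≤ t₀ → 1 / p x j - (n:ℝ) ≤ ℓ w + K * t := by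
      intro t ht0 htt
      have ht12 : t ≤ 1/2 := le_trans htt ht₀a
      have htδ : ‖t • w‖ ≤ δ := by
        rw [norm_smul, Real.norm_eq_abs, abs_of_pos ht0]
        have h4 : t ≤ δ/(‖w‖+1) := le_trans htt ht₀b
        have h5 : (0:ℝ) ≤ ‖w‖ := norm_nonneg w
        calc t * ‖w‖ ≤ (δ/(‖w‖+1)) * (‖w‖+1) := by nlinarith
          _ = δ := by field_simp
      have hr1 : ∀ i, 0 < p x i + t * D i := by
        intro i
        have := hDlb i
        have := hpos i
        nlinarith
      have hr2 : ∑ i, (p x i + t * D i) = 1 := by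
        rw [Finset.sum_add_distrib, hsum, ← Finset.mul_sum, hDsum]
        ring
      have hr3 : ∑ i, (p x i + t * D i) • a i = x + t • w := by
        simp only [add_smul, mul_smul]
        rw [Finset.sum_add_distrib, hrep, ← Finset.smul_sum, hDrep]
      have hle := entU_le a (x + t • w) _ hr1 hr2 hr3
      have hup2 := hup (t • w) htδ
      have hsum2 : ∑ i, (Real.log (p x i) + (t * D i / p x i - 2 * (t * D i / p x i)^2))
          ≤ ∑ i, Real.log (p x i + t * D i) := by
        apply Finset.sum_le_sum
        intro i _
        have hd2 : -(p x i / 2) ≤ t * D i := by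
          have hh1 : t * (-p x i) ≤ t * D i := mul_le_mul_of_nonneg_left (hDlb i) ht0.le
          have hh2 : t * p x i ≤ (1/2) * p x i := mul_le_mul_of_nonneg_right ht12 (hpos i).le
          linarith
        have := log_lb (hpos i) hd2
        linarith
      have e1 : ∑ i, (Real.log (p x i) + (t * D i / p x i - 2 * (t * D i / p x i)^2))
          = entropyU a x + t * (1 / p x j - n) - C₂ * t^2 := by
        rw [Finset.sum_add_distrib, Finset.sum_sub_distrib, hlog]
        have e1a : ∑ i, t * D i / p x i = t * (1 / p x j - n) := by
          rw [← hDdiv, Finset.mul_sum]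
          apply Finset.sum_congr rfl
          intro i _
          ring
        have e1b : ∑ i, 2 * (t * D i / p x i)^2 = C₂ * t^2 := by
          rw [hC₂, Finset.sum_mul]
          apply Finset.sum_congr rfl
          intro i _
          ring
        rw [e1a, e1b]
        ring
      have e2 : ℓ (t • w) = t * ℓ w := by
        rw [map_smul]
        simp
      have e3 : ‖t • w‖^2 = t^2 * ‖w‖^2 := by
        rw [norm_smul, Real.norm_eq_abs, mul_pow, sq_abs]
      rw [e2, e3] at hup2
      rw [e1] at hsum2
      have final' : t * (1 / p x j - n) ≤ t * ℓ w + (C₂ + C * ‖w‖^2) * t^2 := by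
        nlinarith [hsum2, hle, hup2]
      have final : t * (1 / p x j - n) ≤ t * (ℓ w + K * t) := by
        have hKe : t * (ℓ w + K * t) = t * ℓ w + (C₂ + C * ‖w‖^2) * t^2 := by
          rw [hK]; ring
        rw [hKe]
        exact final'
      exact le_of_mul_le_mul_left final ht0
    by_contra hcon
    push_neg at hcon
    have hAB : 0 < (1 / p x j - (n:ℝ)) - ℓ w := by linarith
    set A := 1 / p x j - (n:ℝ) with hA
    set B := ℓ w with hB
    clear_value A B
    set t : ℝ := min t₀ ((A - B) / (2 * (K + 1))) with htdef
    have ht0 : 0 < t := lt_min ht₀0 (div_pos hAB (by linarith))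
    have htta : t ≤ t₀ := min_le_left _ _
    have h7 : t ≤ (A - B) / (2 * (K + 1)) := min_le_right _ _
    clear_value t
    have h6 := hstep t ht0 htta
    have h8 : K * t ≤ K * ((A - B) / (2 * (K + 1))) := mul_le_mul_of_nonneg_left h7 hK0
    have h9 : K * ((A - B) / (2 * (K + 1))) ≤ (A - B) / 2 := by
      rw [← mul_div_assoc, div_le_div_iff₀ (by linarith : (0:ℝ) < 2 * (K + 1)) (by norm_num : (0:ℝ) < 2)]
      nlinarith [hAB, hK0]
    linarith
  -- final summation argument
  rw [hfder]
  have happ2 : (LinearMap.toContinuousLinearMap ℓ) (x - a k) = ℓ (x - a k) :=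
    congrFun (LinearMap.coe_toContinuousLinearMap' ℓ) (x - a k)
  rw [happ2]
  have hneg : ℓ (x - a k) = - ℓ (a k - x) := by
    rw [← map_neg]
    congr 1
    abel
  set g : Fin n → ℝ := fun i => p x i * ((n:ℝ) + ℓ (a i - x) - 1 / p x i) with hg
  have hg0 : ∀ i ∈ univ, 0 ≤ g i := by
    intro i _
    apply mul_nonneg (hpos i).le
    have := hkey i
    linarith
  have t1 : ∑ i, p x i * (n:ℝ) = n := by
    rw [← Finset.sum_mul, hsum, one_mul]
  have t2 : ∑ i, p x i * ℓ (a i - x) = 0 := by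
    have hc : ∀ i ∈ univ, p x i * ℓ (a i - x) = ℓ (p x i • (a i - x)) := by
      intro i _
      rw [map_smul]
      simp
    rw [Finset.sum_congr rfl hc, ← map_sum]
    have hz : ∑ i, p x i • (a i - x) = 0 := by
      simp only [smul_sub]
      rw [Finset.sum_sub_distrib, hrep, ← Finset.sum_smul, hsum, one_smul, sub_self]
    rw [hz, map_zero]
  have t3 : ∑ i, p x i * (1 / p x i) = (n:ℝ) := by
    have hc : ∀ i ∈ univ, p x i * (1 / p x i) = (1:ℝ) := by
      intro i _
      rw [mul_one_div, div_self (hpos i).ne']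
    rw [Finset.sum_congr rfl hc]
    simp [Finset.card_univ]
  have hgsum : ∑ i, g i = 0 := by
    have hc : ∀ i ∈ univ, g i = p x i * (n:ℝ) + p x i * ℓ (a i - x) - p x i * (1 / p x i) := by
      intro i _
      simp only [hg]
      ring
    rw [Finset.sum_congr rfl hc, Finset.sum_sub_distrib, Finset.sum_add_distrib, t1, t2, t3]
    ring
  have hgk := (Finset.sum_eq_zero_iff_of_nonneg hg0).1 hgsum k (mem_univ k)
  have hk0 : (n:ℝ) + ℓ (a k - x) - 1 / p x k = 0 := by
    rcases mul_eq_zero.1 hgk with h | h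
    · exact absurd h (hpos k).ne'
    · exact h
  rw [hneg]
  linarith
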